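/- For β ∈ (0,1) and t > 0, the Mittag-Leffler density f_β(t) = ∫₀^∞ θe^{-θt}K_β(θ)dθ is strictly positive and strictly decreasing in t on (0,∞), and lim_{t→0⁺} f_β(t) = ∞. -/

import Mathlib

noncomputable def Kβ (β θ : ℝ) : ℝ :=
  (1 / Real.pi) * θ ^ (β - 1) * Real.sin (β * Real.pi) /
    (θ ^ (2 * β) + 2 * θ ^ β * Real.cos (β * Real.pi) + 1)

noncomputable def fβ (β t : ℝ) : ℝ := ∫ θ in Set.Ioi (0:ℝ), θ * Real.exp (-θ * t) * Kβ β θ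

open Real MeasureTheory Set Filter

section Aux

variable {β : ℝ}

lemma sinβπ_pos (hβ : β ∈ Set.Ioo (0:ℝ) 1) : 0 < Real.sin (β * Real.pi) :=
  Real.sin_pos_of_pos_of_lt_pi (mul_pos hβ.1 Real.pi_pos)
    (by nlinarith [Real.pi_pos, hβ.2])

lemma denom_eq {θ : ℝ} (hθ : (0:ℝ) < θ) :
    θ ^ (2*β) + 2 * θ^β * Real.cos (β*Real.pi) + 1
      = (θ^β + Real.cos (β*Real.pi))^2 + Real.sin (β*Real.pi)^2 := by
  have h2 : θ ^ (2*β) = (θ^β)^2 := by rw [two_mul, Real.rpow_add hθ, sq]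
  have hsc := Real.sin_sq_add_cos_sq (β*Real.pi)
  rw [h2]; nlinarith [hsc]

lemma denom_pos (hβ : β ∈ Set.Ioo (0:ℝ) 1) {θ : ℝ} (hθ : (0:ℝ) < θ) :
    0 < θ ^ (2*β) + 2 * θ^β * Real.cos (β*Real.pi) + 1 := by
  rw [denom_eq hθ]
  exact add_pos_of_nonneg_of_pos (sq_nonneg _) (pow_pos (sinβπ_pos hβ) 2)

lemma Kβ_pos (hβ : β ∈ Set.Ioo (0:ℝ) 1) {θ : ℝ} (hθ : (0:ℝ) < θ) : 0 < Kβ β θ := by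
  unfold Kβ
  exact div_pos
    (mul_pos (mul_pos (by positivity) (Real.rpow_pos_of_pos hθ _)) (sinβπ_pos hβ))
    (denom_pos hβ hθ)

lemma Kβ_le (hβ : β ∈ Set.Ioo (0:ℝ) 1) {θ : ℝ} (hθ : (0:ℝ) < θ) :
    Kβ β θ ≤ θ^(β-1) / (Real.pi * Real.sin (β*Real.pi)) := by
  have hs := sinβπ_pos hβ
  have hπ := Real.pi_pos
  have hA : (0:ℝ) ≤ (1 / Real.pi) * θ ^ (β - 1) * Real.sin (β * Real.pi) :=
    le_of_lt (mul_pos (mul_pos (by positivity) (Real.rpow_pos_of_pos hθ _)) hs)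
  have hD : Real.sin (β*Real.pi)^2 ≤ θ ^ (2*β) + 2 * θ^β * Real.cos (β*Real.pi) + 1 := by
    rw [denom_eq hθ]; nlinarith [sq_nonneg (θ^β + Real.cos (β*Real.pi))]
  calc Kβ β θ ≤ (1 / Real.pi) * θ ^ (β - 1) * Real.sin (β * Real.pi) / Real.sin (β*Real.pi)^2 :=
        div_le_div_of_nonneg_left hA (pow_pos hs 2) hD
    _ = θ^(β-1) / (Real.pi * Real.sin (β*Real.pi)) := by
        field_simp

lemma Kβ_ge (hβ : β ∈ Set.Ioo (0:ℝ) 1) {θ : ℝ} (hθ : (1:ℝ) ≤ θ) :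
    Real.sin (β*Real.pi) / (4*Real.pi) * θ^(-β-1) ≤ Kβ β θ := by
  have hθ0 : (0:ℝ) < θ := lt_of_lt_of_le one_pos hθ
  have hs := sinβπ_pos hβ
  have hπ := Real.pi_pos
  have hx : (1:ℝ) ≤ θ^β := Real.one_le_rpow hθ hβ.1.le
  have h2 : θ ^ (2*β) = (θ^β)^2 := by rw [two_mul, Real.rpow_add hθ0, sq]
  have hA : (0:ℝ) ≤ (1 / Real.pi) * θ ^ (β - 1) * Real.sin (β * Real.pi) :=
    le_of_lt (mul_pos (mul_pos (by positivity) (Real.rpow_pos_of_pos hθ0 _)) hs)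
  have hD : θ ^ (2*β) + 2 * θ^β * Real.cos (β*Real.pi) + 1 ≤ 4 * θ^(2*β) := by
    rw [h2]
    nlinarith [Real.cos_le_one (β*Real.pi), Real.neg_one_le_cos (β*Real.pi), hx,
      mul_le_mul_of_nonneg_left (Real.cos_le_one (β*Real.pi)) (by linarith : (0:ℝ) ≤ 2*θ^β),
      sq_nonneg (θ^β - 1)]
  have hd : θ^(β-1)/θ^(2*β) = θ^(-β-1) := by
    rw [← Real.rpow_sub hθ0, show β-1-2*β = -β-1 by ring]
  have key : (1 / Real.pi) * θ ^ (β - 1) * Real.sin (β * Real.pi) / (4 * θ^(2*β))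
      = Real.sin (β*Real.pi) / (4*Real.pi) * θ^(-β-1) := by
    rw [← hd]; ring
  calc Real.sin (β*Real.pi) / (4*Real.pi) * θ^(-β-1)
      = (1 / Real.pi) * θ ^ (β - 1) * Real.sin (β * Real.pi) / (4 * θ^(2*β)) := key.symm
    _ ≤ Kβ β θ := div_le_div_of_nonneg_left hA (denom_pos hβ hθ0) hD

lemma continuousOn_g (hβ : β ∈ Set.Ioo (0:ℝ) 1) (t : ℝ) :
    ContinuousOn (fun θ : ℝ => θ * Real.exp (-θ * t) * Kβ β θ) (Set.Ioi 0) := by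
  have hrp : ∀ p : ℝ, ContinuousOn (fun θ : ℝ => θ^p) (Set.Ioi 0) := fun p =>
    continuousOn_id.rpow_const (fun x hx => Or.inl (ne_of_gt hx))
  have hK : ContinuousOn (Kβ β) (Set.Ioi 0) := by
    unfold Kβ
    apply ContinuousOn.div
    · exact (continuousOn_const.mul (hrp _)).mul continuousOn_const
    · exact ((hrp _).add ((continuousOn_const.mul (hrp _)).mul continuousOn_const)).add
        continuousOn_const
    · intro x hx; exact (denom_pos hβ hx).ne'
  exact (continuousOn_id.mul
    ((Real.continuous_exp.comp ((continuous_id.neg).mul continuous_const)).continuousOn)).mul hK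

lemma g_nonneg (hβ : β ∈ Set.Ioo (0:ℝ) 1) {t θ : ℝ} (hθ : 0 < θ) :
    0 ≤ θ * Real.exp (-θ * t) * Kβ β θ :=
  le_of_lt (mul_pos (mul_pos hθ (Real.exp_pos _)) (Kβ_pos hβ hθ))

lemma rpow_split {θ : ℝ} (hθ : (0:ℝ) < θ) (a : ℝ) : θ * θ^(a-1) = θ^a := by
  have := Real.rpow_add hθ 1 (a-1)
  rw [Real.rpow_one] at this
  rw [← this, show (1:ℝ)+(a-1) = a by ring]

lemma integrableOn_g (hβ : β ∈ Set.Ioo (0:ℝ) 1) {t : ℝ} (ht : 0 < t) :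
    IntegrableOn (fun θ : ℝ => θ * Real.exp (-θ * t) * Kβ β θ) (Set.Ioi 0) := by
  have hs := sinβπ_pos hβ
  have hπ := Real.pi_pos
  have hmaj : IntegrableOn (fun θ : ℝ => θ^β * Real.exp (-t*θ)) (Set.Ioi 0) := by
    have := integrableOn_rpow_mul_exp_neg_mul_rpow
      (by linarith [hβ.1] : (-1:ℝ) < β) (one_pos : (0:ℝ) < 1) ht
    simpa [Real.rpow_one] using this
  apply Integrable.mono' (hmaj.const_mul (1/(Real.pi * Real.sin (β*Real.pi))))
  · exact (continuousOn_g hβ t).aestronglyMeasurable measurableSet_Ioi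
  · filter_upwards [self_mem_ae_restrict measurableSet_Ioi] with θ hθ
    have hθ0 : (0:ℝ) < θ := hθ
    rw [Real.norm_of_nonneg (g_nonneg hβ hθ0)]
    have hKle := Kβ_le hβ hθ0
    have h1 : θ * Real.exp (-θ * t) * Kβ β θ
        ≤ θ * Real.exp (-θ * t) * (θ^(β-1) / (Real.pi * Real.sin (β*Real.pi))) :=
      mul_le_mul_of_nonneg_left hKle (le_of_lt (mul_pos hθ0 (Real.exp_pos _)))
    have h2 : θ * Real.exp (-θ * t) * (θ^(β-1) / (Real.pi * Real.sin (β*Real.pi)))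
        = 1/(Real.pi * Real.sin (β*Real.pi)) * (θ^β * Real.exp (-t*θ)) := by
      rw [← rpow_split hθ0 β, show -θ*t = -t*θ by ring]; ring
    rw [h2] at h1
    exact h1

lemma integral_pos_aux (hβ : β ∈ Set.Ioo (0:ℝ) 1) {f : ℝ → ℝ}
    (hf : IntegrableOn f (Set.Ioi 0))
    (hpos : ∀ θ : ℝ, 0 < θ → 0 < f θ) :
    0 < ∫ θ in Set.Ioi (0:ℝ), f θ := by
  rw [setIntegral_pos_iff_support_of_nonneg_ae ?_ hf]
  · refine lt_of_lt_of_le ?_ (measure_mono (fun θ hθ => ⟨(hpos θ hθ).ne', hθ⟩ :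
      Set.Ioi (0:ℝ) ⊆ Function.support f ∩ Set.Ioi 0))
    simp [Real.volume_Ioi]
  · filter_upwards [self_mem_ae_restrict measurableSet_Ioi] with θ hθ
    exact (hpos θ hθ).le

lemma fβ_positive (hβ : β ∈ Set.Ioo (0:ℝ) 1) {t : ℝ} (ht : 0 < t) : 0 < fβ β t :=
  integral_pos_aux hβ (integrableOn_g hβ ht)
    (fun θ hθ => mul_pos (mul_pos hθ (Real.exp_pos _)) (Kβ_pos hβ hθ))

lemma fβ_lower (hβ : β ∈ Set.Ioo (0:ℝ) 1) {t : ℝ} (ht : t ∈ Set.Ioo (0:ℝ) 1) :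
    (Real.sin (β*Real.pi) / (4*Real.pi) * Real.exp (-1)) * (((t⁻¹)^(1-β) - 1)/(1-β))
      ≤ fβ β t := by
  obtain ⟨ht0, ht1⟩ := ht
  have hs := sinβπ_pos hβ
  have hπ := Real.pi_pos
  have hT : (1:ℝ) < t⁻¹ := one_lt_inv_iff₀.mpr ⟨ht0, ht1⟩
  have hsub : Set.Ioc (1:ℝ) t⁻¹ ⊆ Set.Ioi 0 := fun x hx => lt_trans one_pos hx.1
  set c0 : ℝ := Real.sin (β*Real.pi) / (4*Real.pi) * Real.exp (-1) with hc0
  have hc0pos : 0 < c0 := by positivity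
  -- step 2 pointwise
  have hpt : ∀ θ ∈ Set.Ioc (1:ℝ) t⁻¹,
      c0 * θ^(-β) ≤ θ * Real.exp (-θ * t) * Kβ β θ := by
    intro θ hθ
    have hθ1 : (1:ℝ) ≤ θ := hθ.1.le
    have hθ0 : (0:ℝ) < θ := lt_of_lt_of_le one_pos hθ1
    have hθt : θ * t ≤ 1 := by
      calc θ * t ≤ t⁻¹ * t := mul_le_mul_of_nonneg_right hθ.2 ht0.le
        _ = 1 := inv_mul_cancel₀ ht0.ne'
    have hexp : Real.exp (-1) ≤ Real.exp (-θ * t) := Real.exp_le_exp.2 (by linarith)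
    have hK := Kβ_ge hβ hθ1
    have hpow : θ * θ^(-β-1) = θ^(-β) := by
      have h := rpow_split hθ0 (-β)
      rwa [show -β-(1:ℝ) = -β-1 by ring] at h
    calc c0 * θ^(-β) = θ * Real.exp (-1) * (Real.sin (β*Real.pi) / (4*Real.pi) * θ^(-β-1)) := by
          rw [← hpow, hc0]; ring
      _ ≤ θ * Real.exp (-θ * t) * (Real.sin (β*Real.pi) / (4*Real.pi) * θ^(-β-1)) := by
          apply mul_le_mul_of_nonneg_right (mul_le_mul_of_nonneg_left hexp hθ0.le)
          have := Real.rpow_pos_of_pos hθ0 (-β-1)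
          positivity
      _ ≤ θ * Real.exp (-θ * t) * Kβ β θ :=
          mul_le_mul_of_nonneg_left hK (le_of_lt (mul_pos hθ0 (Real.exp_pos _)))
  -- integrability on the interval
  have hrint : IntegrableOn (fun θ : ℝ => c0 * θ^(-β)) (Set.Ioc 1 t⁻¹) := by
    have hri : IntervalIntegrable (fun θ : ℝ => θ^(-β)) volume 1 t⁻¹ :=
      intervalIntegral.intervalIntegrable_rpow' (by linarith [hβ.2])
    exact ((intervalIntegrable_iff_integrableOn_Ioc_of_le hT.le).mp hri).const_mul c0
  have hgint : IntegrableOn (fun θ : ℝ => θ * Real.exp (-θ * t) * Kβ β θ) (Set.Ioc 1 t⁻¹) :=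
    (integrableOn_g hβ ht0).mono_set hsub
  have step2 : (∫ θ in Set.Ioc (1:ℝ) t⁻¹, c0 * θ^(-β))
      ≤ ∫ θ in Set.Ioc (1:ℝ) t⁻¹, θ * Real.exp (-θ * t) * Kβ β θ :=
    setIntegral_mono_on hrint hgint measurableSet_Ioc hpt
  have step1 : (∫ θ in Set.Ioc (1:ℝ) t⁻¹, θ * Real.exp (-θ * t) * Kβ β θ) ≤ fβ β t := by
    apply setIntegral_mono_set (integrableOn_g hβ ht0) ?_ (HasSubset.Subset.eventuallyLE hsub)
    filter_upwards [self_mem_ae_restrict measurableSet_Ioi] with θ hθ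
    exact g_nonneg hβ hθ
  -- compute the left integral
  have hcomp : (∫ θ in Set.Ioc (1:ℝ) t⁻¹, c0 * θ^(-β))
      = c0 * (((t⁻¹)^(1-β) - 1)/(1-β)) := by
    rw [← intervalIntegral.integral_of_le hT.le, intervalIntegral.integral_const_mul,
      integral_rpow (Or.inl (by linarith [hβ.2] : (-1:ℝ) < -β))]
    rw [Real.one_rpow, show -β + 1 = 1-β by ring]
  linarith [step1, step2, hcomp.symm.le, hcomp.le]

end Aux

theorem fβ_pos_strictAnti_blowup (β : ℝ) (hβ : β ∈ Set.Ioo (0:ℝ) 1) :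
    (∀ t ∈ Set.Ioi (0:ℝ), 0 < fβ β t) ∧
    StrictAntiOn (fβ β) (Set.Ioi (0:ℝ)) ∧
    Filter.Tendsto (fβ β) (nhdsWithin 0 (Set.Ioi 0)) Filter.atTop := by
  refine ⟨fun t ht => fβ_positive hβ ht, ?_, ?_⟩
  · -- strict antitonicity
    intro u hu v hv huv
    have hu0 : (0:ℝ) < u := hu
    have hv0 : (0:ℝ) < v := hv
    have hiu := integrableOn_g hβ hu0
    have hiv := integrableOn_g hβ hv0
    have hpos : 0 < ∫ θ in Set.Ioi (0:ℝ),
        (θ * Real.exp (-θ * u) * Kβ β θ - θ * Real.exp (-θ * v) * Kβ β θ) := by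
      apply integral_pos_aux hβ (hiu.sub hiv)
      intro θ hθ
      have hK := Kβ_pos hβ hθ
      have hexp : Real.exp (-θ * v) < Real.exp (-θ * u) :=
        Real.exp_lt_exp.2 (by nlinarith)
      have : θ * Real.exp (-θ * v) * Kβ β θ < θ * Real.exp (-θ * u) * Kβ β θ := by
        apply mul_lt_mul_of_pos_right _ hK
        exact mul_lt_mul_of_pos_left hexp hθ
      simp only [Pi.sub_apply]
      linarith
    rw [integral_sub hiu hiv] at hpos
    unfold fβ
    linarith
  · -- blow-up at 0⁺
    set c0 : ℝ := Real.sin (β*Real.pi) / (4*Real.pi) * Real.exp (-1) with hc0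
    have hc0pos : 0 < c0 := by
      have := sinβπ_pos hβ; have := Real.pi_pos; positivity
    have h1β : (0:ℝ) < 1 - β := by linarith [hβ.2]
    have h1 : Tendsto (fun t : ℝ => (t⁻¹)^(1-β)) (nhdsWithin 0 (Set.Ioi 0)) atTop :=
      (tendsto_rpow_atTop h1β).comp tendsto_inv_nhdsGT_zero
    have h2 : Tendsto (fun t : ℝ => (t⁻¹)^(1-β) - 1) (nhdsWithin 0 (Set.Ioi 0)) atTop := by
      simpa [sub_eq_add_neg] using tendsto_atTop_add_const_right _ (-1 : ℝ) h1
    have h3 := h2.atTop_div_const h1β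
    have h4 := h3.const_mul_atTop hc0pos
    apply tendsto_atTop_mono' _ _ h4
    filter_upwards [Ioo_mem_nhdsGT_of_mem (by norm_num : (0:ℝ) ∈ Set.Ico (0:ℝ) 1)] with t ht
    exact fβ_lower hβ ht
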